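/- Let X = (2(γ₃M₂−γ₂M₃), 2(γ₁M₃−γ₃M₁), 2(γ₂M₁−γ₁M₂), −aγ₂, aγ₁, 0) be the Lagrange vector field on ℝ⁶ with coordinates (γ₁,γ₂,γ₃,M₁,M₂,M₃), a ∈ ℝ. Define the vector fields Y = (−γ₂, γ₁, 0, −M₂, M₁, 0) and Z = (2γ₁, 2γ₂, 2γ₃, M₁, M₂, M₃). Then the Lie brackets satisfy [X, Y] = 0 and [X, Z] = −X at every point, where [X, V]_i = ∑_j ( X_j ∂V_i/∂x_j − V_j ∂X_i/∂x_j ). -/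

import Mathlib

noncomputable section

open scoped BigOperators

/-- Partial derivative of `f` in the `i`-th coordinate direction at `x`. -/
def pd {n : ℕ} (i : Fin n) (f : (Fin n → ℝ) → ℝ) (x : Fin n → ℝ) : ℝ :=
  fderiv ℝ f x (Pi.single i 1)

/-- The Lagrange vector field on `ℝ⁶` with coordinates
`(x₁,…,x₆) = (γ₁,γ₂,γ₃,M₁,M₂,M₃)`. -/
def lagX (a : ℝ) (x : Fin 6 → ℝ) : Fin 6 → ℝ :=
  ![2 * (x 2 * x 4 - x 1 * x 5), 2 * (x 0 * x 5 - x 2 * x 3),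
    2 * (x 1 * x 3 - x 0 * x 4), -(a * x 1), a * x 0, 0]

/-- `f₁ = γ₁² + γ₂² + γ₃²`. -/
def lagF₁ (x : Fin 6 → ℝ) : ℝ := x 0 ^ 2 + x 1 ^ 2 + x 2 ^ 2

/-- `f₂ = γ₁M₁ + γ₂M₂ + γ₃M₃`. -/
def lagF₂ (x : Fin 6 → ℝ) : ℝ := x 0 * x 3 + x 1 * x 4 + x 2 * x 5

/-- `f₃ = M₁² + M₂² + M₃² + aγ₃`. -/
def lagF₃ (a : ℝ) (x : Fin 6 → ℝ) : ℝ := x 3 ^ 2 + x 4 ^ 2 + x 5 ^ 2 + a * x 2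

/-- `f₄ = M₃`. -/
def lagF₄ (x : Fin 6 → ℝ) : ℝ := x 5

/-- The vector field `Y = (−γ₂, γ₁, 0, −M₂, M₁, 0)`. -/
def lagY (x : Fin 6 → ℝ) : Fin 6 → ℝ :=
  ![-(x 1), x 0, 0, -(x 4), x 3, 0]

/-- The vector field `Z = (2γ₁, 2γ₂, 2γ₃, M₁, M₂, M₃)`. -/
def lagZ (x : Fin 6 → ℝ) : Fin 6 → ℝ :=
  ![2 * x 0, 2 * x 1, 2 * x 2, x 3, x 4, x 5]

/-- The Lie bracket of vector fields: `[X,V]_i = ∑_j (X_j ∂V_i/∂x_j − V_j ∂X_i/∂x_j)`. -/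
def vecLie {n : ℕ} (X V : (Fin n → ℝ) → Fin n → ℝ) (x : Fin n → ℝ) (i : Fin n) : ℝ :=
  ∑ j, (X x j * pd j (fun y => V y i) x - V x j * pd j (fun y => X y i) x)

lemma pd_of_hasFDerivAt {n : ℕ} {j : Fin n} {f : (Fin n → ℝ) → ℝ}
    {f' : (Fin n → ℝ) →L[ℝ] ℝ} {x : Fin n → ℝ} (h : HasFDerivAt f f' x) :
    pd j f x = f' (Pi.single j 1) := by
  rw [pd, h.fderiv]

lemma hD {n : ℕ} (k : Fin n) (x : Fin n → ℝ) :
    HasFDerivAt (fun y : Fin n → ℝ => y k)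
      (ContinuousLinearMap.proj (R := ℝ) (φ := fun _ : Fin n => ℝ) k) x :=
  (ContinuousLinearMap.proj (R := ℝ) (φ := fun _ : Fin n => ℝ) k).hasFDerivAt

lemma pd_coord {n : ℕ} (j k : Fin n) (x : Fin n → ℝ) :
    pd j (fun y => y k) x = Pi.single (M := fun _ => ℝ) j 1 k := by
  rw [pd_of_hasFDerivAt (hD k x)]; rfl

lemma pd_neg_coord {n : ℕ} (j k : Fin n) (x : Fin n → ℝ) :
    pd j (fun y => -(y k)) x = -(Pi.single (M := fun _ => ℝ) j 1 k) := by
  rw [pd_of_hasFDerivAt (f := fun y => -(y k)) (hD k x).neg]; rfl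

lemma pd_const_mul_coord {n : ℕ} (j k : Fin n) (c : ℝ) (x : Fin n → ℝ) :
    pd j (fun y => c * y k) x = c * Pi.single (M := fun _ => ℝ) j 1 k := by
  rw [pd_of_hasFDerivAt ((hD k x).const_mul c)]; rfl

lemma pd_neg_const_mul_coord {n : ℕ} (j k : Fin n) (c : ℝ) (x : Fin n → ℝ) :
    pd j (fun y => -(c * y k)) x = -(c * Pi.single (M := fun _ => ℝ) j 1 k) := by
  rw [pd_of_hasFDerivAt (f := fun y => -(c * y k)) ((hD k x).const_mul c).neg]; rfl

lemma pd_const {n : ℕ} (j : Fin n) (c : ℝ) (x : Fin n → ℝ) :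
    pd j (fun _ => c) x = 0 := by
  rw [pd_of_hasFDerivAt (hasFDerivAt_const c x)]; rfl

lemma pd_quad (j k l m p : Fin 6) (x : Fin 6 → ℝ) :
    pd j (fun y => 2 * (y k * y l - y m * y p)) x =
      2 * (x k * Pi.single (M := fun _ => ℝ) j 1 l + x l * Pi.single (M := fun _ => ℝ) j 1 k -
        (x m * Pi.single (M := fun _ => ℝ) j 1 p + x p * Pi.single (M := fun _ => ℝ) j 1 m)) := by
  rw [pd_of_hasFDerivAt (f := fun y => 2 * (y k * y l - y m * y p)) ((((hD k x).mul (hD l x)).sub ((hD m x).mul (hD p x))).const_mul 2)]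
  simp [ContinuousLinearMap.proj]


lemma va0 (a b c d e f : ℝ) : ![a,b,c,d,e,f] 0 = a := rfl
lemma va1 (a b c d e f : ℝ) : ![a,b,c,d,e,f] 1 = b := rfl
lemma va2 (a b c d e f : ℝ) : ![a,b,c,d,e,f] 2 = c := rfl
lemma va3 (a b c d e f : ℝ) : ![a,b,c,d,e,f] 3 = d := rfl
lemma va4 (a b c d e f : ℝ) : ![a,b,c,d,e,f] 4 = e := rfl
lemma va5 (a b c d e f : ℝ) : ![a,b,c,d,e,f] 5 = f := rfl

lemma vb0 (a b c d e f : ℝ) : ![a,b,c,d,e,f] ⟨0, by norm_num⟩ = a := rfl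
lemma vb1 (a b c d e f : ℝ) : ![a,b,c,d,e,f] ⟨1, by norm_num⟩ = b := rfl
lemma vb2 (a b c d e f : ℝ) : ![a,b,c,d,e,f] ⟨2, by norm_num⟩ = c := rfl
lemma vb3 (a b c d e f : ℝ) : ![a,b,c,d,e,f] ⟨3, by norm_num⟩ = d := rfl
lemma vb4 (a b c d e f : ℝ) : ![a,b,c,d,e,f] ⟨4, by norm_num⟩ = e := rfl
lemma vb5 (a b c d e f : ℝ) : ![a,b,c,d,e,f] ⟨5, by norm_num⟩ = f := rfl

/-- For the Lagrange vector field `X`: `[X, Y] = 0` and `[X, Z] = −X`. -/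
theorem lagrange_symmetry_fields (a : ℝ) (x : Fin 6 → ℝ) (i : Fin 6) :
    vecLie (lagX a) (fun y => lagY y) x i = 0 ∧
    vecLie (lagX a) (fun y => lagZ y) x i = -(lagX a x i) := by
  fin_cases i <;>
  constructor <;>
  · simp only [vecLie, Fin.sum_univ_six, lagX, lagY, lagZ]
    simp only [va0, va1, va2, va3, va4, va5, vb0, vb1, vb2, vb3, vb4, vb5]
    simp only [pd_quad, pd_coord, pd_neg_coord, pd_const_mul_coord,
      pd_neg_const_mul_coord, pd_const]
    simp [Pi.single_apply]
    try ring
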